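/- The discrete LPS tangent stiffness is symmetric when the discretization uses symmetric families and reciprocal quadrature weights: if j ∈ F_i ⟺ i ∈ F_j, V_j^{(i)} = V_i^{(j)}, and m_i = m_j =: m for all interacting pairs, then the matrix A of the linear map {u_i} ↦ {−𝓛^h_LPS[x_i]} (with the discrete LPS definitions) satisfies A = Aᵀ with respect to the volume-weighted inner product ⟨u, v⟩ = Σ_i u_i · v_i V_i. -/

import Mathlib

local notation "E3" => EuclideanSpace ℝ (Fin 3)

/-- Discrete linearized nonlocal dilatation (common weighted volume `m`):
`θ_i = (3/m) Σ_{j∈F_i} κ_{ij} (x_j−x_i)·(u_j−u_i) V_j`. -/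
noncomputable def dTheta {ι : Type*} (x : ι → E3) (F : ι → Finset ι) (V : ι → ℝ)
    (κ : ℝ → ℝ) (m : ℝ) (u : ι → E3) (i : ι) : ℝ :=
  (3 / m) * ∑ j ∈ F i, κ ‖x j - x i‖ * (inner ℝ (x j - x i) (u j - u i) : ℝ) * V j

/-- Discrete linearized LPS operator with a common weighted volume `m`:
`𝓛^h_i = Σ_{j∈F_i} (κ_{ij}/m){(3K−5G)(θ_i+θ_j)(x_j−x_i)
  + 30G ((x_j−x_i)⊗(x_j−x_i)/|x_j−x_i|²)(u_j−u_i)} V_j`. -/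
noncomputable def dLPS {ι : Type*} (x : ι → E3) (F : ι → Finset ι) (V : ι → ℝ)
    (κ : ℝ → ℝ) (m K G : ℝ) (u : ι → E3) (i : ι) : E3 :=
  ∑ j ∈ F i, (V j * (κ ‖x j - x i‖ / m)) •
    (((3 * K - 5 * G) * (dTheta x F V κ m u i + dTheta x F V κ m u j)) • (x j - x i) +
      ((30 * G / ‖x j - x i‖ ^ 2) * (inner ℝ (x j - x i) (u j - u i) : ℝ)) • (x j - x i))

private lemma sum_swap_mem {ι : Type*} [Fintype ι] (F : ι → Finset ι)
    (hF : ∀ i j, j ∈ F i ↔ i ∈ F j) (f : ι → ι → ℝ) :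
    ∑ i, ∑ j ∈ F i, f i j = ∑ i, ∑ j ∈ F i, f j i := by
  classical
  have h1 : ∀ g : ι → ι → ℝ, (∑ i, ∑ j ∈ F i, g i j)
      = ∑ i : ι, ∑ j : ι, if j ∈ F i then g i j else 0 := fun g =>
    Finset.sum_congr rfl fun i _ => by rw [Finset.sum_ite_mem, Finset.univ_inter]
  rw [h1, h1, Finset.sum_comm]
  exact Finset.sum_congr rfl fun i _ => Finset.sum_congr rfl fun j _ => by
    simp only [hF j i]

/-- With symmetric families and reciprocal quadrature weights, the discrete LPS
tangent stiffness (the linear map `u ↦ −𝓛^h_LPS`) is symmetric with respect to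
the volume-weighted inner product `⟨u, v⟩ = Σ_i u_i·v_i V_i`. -/
theorem dLPS_symmetric {ι : Type*} [Fintype ι]
    (x : ι → E3) (F : ι → Finset ι) (V : ι → ℝ) (hV : ∀ i, 0 < V i)
    (κ : ℝ → ℝ) (hκ : ∀ r, 0 ≤ κ r)
    (m : ℝ) (hm : 0 < m)
    (K G : ℝ) (hK : 0 < K) (hG : 0 < G)
    (hFsymm : ∀ i j, j ∈ F i ↔ i ∈ F j) :
    ∀ u v : ι → E3,
      (∑ i, V i * (inner ℝ (-dLPS x F V κ m K G u i) (v i) : ℝ))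
        = ∑ i, V i * (inner ℝ (u i) (-dLPS x F V κ m K G v i) : ℝ) := by
  intro u v
  set θ : (ι → E3) → ι → ℝ := dTheta x F V κ m with hθ
  -- the two kinds of per-pair terms
  set A : (ι → E3) → (ι → E3) → ι → ι → ℝ := fun w z i j =>
    -(V i * (V j * (κ ‖x j - x i‖ / m)) *
      ((3 * K - 5 * G) * (θ w i + θ w j) * (inner ℝ (x j - x i) (z i) : ℝ))) with hA
  set B : (ι → E3) → (ι → E3) → ι → ι → ℝ := fun w z i j =>
    -(V i * (V j * (κ ‖x j - x i‖ / m)) *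
      ((30 * G / ‖x j - x i‖ ^ 2) * (inner ℝ (x j - x i) (w j - w i) : ℝ) *
        (inner ℝ (x j - x i) (z i) : ℝ))) with hB
  -- expansion of the weighted inner product against -dLPS
  have hexp : ∀ w z : ι → E3,
      (∑ i, V i * (inner ℝ (-dLPS x F V κ m K G w i) (z i) : ℝ))
        = (∑ i, ∑ j ∈ F i, A w z i j) + ∑ i, ∑ j ∈ F i, B w z i j := by
    intro w z
    rw [← Finset.sum_add_distrib]
    refine Finset.sum_congr rfl fun i _ => ?_
    rw [← Finset.sum_add_distrib, inner_neg_left, dLPS, sum_inner, mul_neg,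
      Finset.mul_sum, ← Finset.sum_neg_distrib]
    refine Finset.sum_congr rfl fun j _ => ?_
    simp only [hA, hB, inner_add_left, real_inner_smul_left, hθ]
    ring
  -- collapse lemma: weighted sum of inner-product differences gives θ/3
  have hcollapse : ∀ (z : ι → E3) (i : ι),
      (∑ j ∈ F i, (V j * (κ ‖x j - x i‖ / m)) *
          ((inner ℝ (x j - x i) (z j) : ℝ) - (inner ℝ (x j - x i) (z i) : ℝ)))
        = (1 / 3) * θ z i := by
    intro z i
    rw [hθ, dTheta, Finset.mul_sum, Finset.mul_sum]
    refine Finset.sum_congr rfl fun j _ => ?_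
    rw [inner_sub_right]
    ring
  -- the A part sums to a symmetric expression
  have hAsum : ∀ w z : ι → E3,
      (∑ i, ∑ j ∈ F i, A w z i j)
        = (3 * K - 5 * G) / 3 * ∑ i, V i * θ w i * θ z i := by
    intro w z
    have hsplit : (∑ i, ∑ j ∈ F i, A w z i j)
        = (∑ i, ∑ j ∈ F i,
            -(V i * (V j * (κ ‖x j - x i‖ / m)) *
              ((3 * K - 5 * G) * θ w i * (inner ℝ (x j - x i) (z i) : ℝ))))
          + ∑ i, ∑ j ∈ F i,
            -(V i * (V j * (κ ‖x j - x i‖ / m)) *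
              ((3 * K - 5 * G) * θ w j * (inner ℝ (x j - x i) (z i) : ℝ))) := by
      rw [← Finset.sum_add_distrib]
      refine Finset.sum_congr rfl fun i _ => ?_
      rw [← Finset.sum_add_distrib]
      refine Finset.sum_congr rfl fun j _ => ?_
      simp only [hA]; ring
    have hswap : (∑ i, ∑ j ∈ F i,
            -(V i * (V j * (κ ‖x j - x i‖ / m)) *
              ((3 * K - 5 * G) * θ w j * (inner ℝ (x j - x i) (z i) : ℝ))))
        = ∑ i, ∑ j ∈ F i,
            (V i * (V j * (κ ‖x j - x i‖ / m)) *
              ((3 * K - 5 * G) * θ w i * (inner ℝ (x j - x i) (z j) : ℝ))) := by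
      rw [sum_swap_mem F hFsymm]
      refine Finset.sum_congr rfl fun i _ => Finset.sum_congr rfl fun j _ => ?_
      rw [show x i - x j = -(x j - x i) by abel]
      rw [norm_neg, inner_neg_left]
      ring
    rw [hsplit, hswap, ← Finset.sum_add_distrib]
    have hmid : ∀ i, ((∑ j ∈ F i,
            -(V i * (V j * (κ ‖x j - x i‖ / m)) *
              ((3 * K - 5 * G) * θ w i * (inner ℝ (x j - x i) (z i) : ℝ))))
          + ∑ j ∈ F i,
            (V i * (V j * (κ ‖x j - x i‖ / m)) *
              ((3 * K - 5 * G) * θ w i * (inner ℝ (x j - x i) (z j) : ℝ))))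
        = ((3 * K - 5 * G) * (V i * θ w i)) *
            ∑ j ∈ F i, (V j * (κ ‖x j - x i‖ / m)) *
              ((inner ℝ (x j - x i) (z j) : ℝ) - (inner ℝ (x j - x i) (z i) : ℝ)) := by
      intro i
      rw [← Finset.sum_add_distrib, Finset.mul_sum]
      refine Finset.sum_congr rfl fun j _ => ?_
      ring
    calc (∑ i, ((∑ j ∈ F i,
            -(V i * (V j * (κ ‖x j - x i‖ / m)) *
              ((3 * K - 5 * G) * θ w i * (inner ℝ (x j - x i) (z i) : ℝ))))
          + ∑ j ∈ F i,
            (V i * (V j * (κ ‖x j - x i‖ / m)) *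
              ((3 * K - 5 * G) * θ w i * (inner ℝ (x j - x i) (z j) : ℝ)))))
        = ∑ i, ((3 * K - 5 * G) * (V i * θ w i)) * ((1 / 3) * θ z i) := by
          refine Finset.sum_congr rfl fun i _ => ?_
          rw [hmid i, hcollapse z i]
      _ = (3 * K - 5 * G) / 3 * ∑ i, V i * θ w i * θ z i := by
          rw [Finset.mul_sum]
          exact Finset.sum_congr rfl fun i _ => by ring
  -- the B part is symmetric
  have hBsum : (∑ i, ∑ j ∈ F i, B u v i j) = ∑ i, ∑ j ∈ F i, B v u i j := by
    have hanti : ∀ i j, B u v j i - B v u j i = -(B u v i j - B v u i j) := by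
      intro i j
      simp only [hB]
      rw [show x i - x j = -(x j - x i) by abel, show u i - u j = -(u j - u i) by abel,
        show v i - v j = -(v j - v i) by abel]
      simp only [norm_neg, inner_neg_neg, inner_neg_left, inner_neg_right, inner_sub_right]
      ring
    have h0 : (∑ i, ∑ j ∈ F i, (B u v i j - B v u i j)) = 0 := by
      have h1 := sum_swap_mem F hFsymm (fun i j => B u v i j - B v u i j)
      have h2 : (∑ i, ∑ j ∈ F i, (B u v j i - B v u j i))
          = -∑ i, ∑ j ∈ F i, (B u v i j - B v u i j) := by
        rw [← Finset.sum_neg_distrib]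
        refine Finset.sum_congr rfl fun i _ => ?_
        rw [← Finset.sum_neg_distrib]
        exact Finset.sum_congr rfl fun j _ => hanti i j
      linarith [h1, h2]
    have hsub : (∑ i, ∑ j ∈ F i, (B u v i j - B v u i j))
        = (∑ i, ∑ j ∈ F i, B u v i j) - ∑ i, ∑ j ∈ F i, B v u i j := by
      rw [← Finset.sum_sub_distrib]
      exact Finset.sum_congr rfl fun i _ => by rw [← Finset.sum_sub_distrib]
    rw [hsub] at h0
    linarith [h0]
  -- put everything together
  have hrhs : (∑ i, V i * (inner ℝ (u i) (-dLPS x F V κ m K G v i) : ℝ))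
      = ∑ i, V i * (inner ℝ (-dLPS x F V κ m K G v i) (u i) : ℝ) := by
    exact Finset.sum_congr rfl fun i _ => by rw [real_inner_comm]
  rw [hexp u v, hrhs, hexp v u, hAsum u v, hAsum v u, hBsum]
  congr 1
  congr 1
  exact Finset.sum_congr rfl fun i _ => by ring
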